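/- arXiv:2007.14723 — 2 statements merged into one kernel-verified Lean document; each statement's English description precedes it below -/
import Mathlib

section
/- Let (μ_n) be a JN-sequence on a Tychonoff space X. Then the union ⋃_n supp(μ_n) of the supports of the μ_n is a bounded subset of X, i.e., for every continuous f : X → ℝ the set f(⋃_n supp(μ_n)) is a bounded subset of ℝ. -/
open Filter Topology
open scoped Classical

/-- A JN-sequence on a topological space `X`: a sequence of finitely supported signed
measures (modelled as finitely supported functions `X →₀ ℝ`) of norm one converging to `0`
on every continuous real-valued function. -/
def IsJNSeq {X : Type*} [TopologicalSpace X] (μ : ℕ → (X →₀ ℝ)) : Prop :=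
  (∀ n, ∑ x ∈ (μ n).support, |μ n x| = 1) ∧
  ∀ f : X → ℝ, Continuous f →
    Tendsto (fun n => ∑ x ∈ (μ n).support, μ n x * f x) atTop (nhds 0)

section Aux

variable {X : Type*} [TopologicalSpace X]

/-- Separation of a point from a finite set by a continuous function. -/
lemma jn_sep [CompletelyRegularSpace X] [T2Space X] (x : X) (s : Finset X) :
    ∃ u : X → ℝ, Continuous u ∧ u x = 1 ∧ ∀ y ∈ s.erase x, u y = 0 := by
  have hcl : IsClosed ((s.erase x : Finset X) : Set X) := (s.erase x).finite_toSet.isClosed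
  have hxn : x ∉ ((s.erase x : Finset X) : Set X) := by
    simp
  obtain ⟨v, hvc, hvx, hvK⟩ := CompletelyRegularSpace.completely_regular x _ hcl hxn
  refine ⟨fun y => 1 - (v y : ℝ), continuous_const.sub (continuous_subtype_val.comp hvc),
    by simp [hvx], fun y hy => ?_⟩
  have : v y = 1 := hvK (Finset.mem_coe.mpr hy)
  simp [this]

/-- A stage of the recursive construction. -/
structure JNStage (μ : ℕ → (X →₀ ℝ)) (F : X → ℝ) where
  n : ℕ
  x : X
  g : X → ℝ
  G : X → ℝ
  s : Finset X
  B : ℝ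
  hx : x ∈ (μ n).support
  hgc : Continuous g
  hGc : Continuous G
  hslab : ∀ y, g y ≠ 0 → |F y - F x| < 1/2
  hB : ∀ y ∈ s, F y ≤ B
  hsupp : (μ n).support ⊆ s
  hbig : 1/2 ≤ |∑ y ∈ (μ n).support, μ n y * G y|

variable {μ : ℕ → (X →₀ ℝ)} {F : X → ℝ}

/-- Finding an index far out whose support reaches above `R` and on which the measure of a
given continuous function is small. -/
lemma jn_exists_index (hμ : IsJNSeq μ)
    (hunb : ∀ M : ℝ, ∃ x ∈ ⋃ n, ((μ n).support : Set X), M < F x)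
    (G : X → ℝ) (hG : Continuous G) (N : ℕ) (R : ℝ) :
    ∃ m, N ≤ m ∧ |∑ y ∈ (μ m).support, μ m y * G y| < 1/2 ∧
      ∃ x ∈ (μ m).support, R < F x := by
  have htend := hμ.2 G hG
  rw [Metric.tendsto_atTop] at htend
  obtain ⟨N₁, hN₁⟩ := htend (1/2) (by norm_num)
  set N' := max N N₁ with hN'
  set T : Finset X := (Finset.range N').biUnion (fun n => (μ n).support) with hT
  obtain ⟨M0, hM0⟩ : ∃ M0, ∀ y ∈ T, F y ≤ M0 := by
    obtain ⟨M0, hM0⟩ := (T.finite_toSet.image F).bddAbove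
    exact ⟨M0, fun y hy => hM0 ⟨y, by simpa using hy, rfl⟩⟩
  obtain ⟨x', hx'U, hx'⟩ := hunb (max M0 R)
  obtain ⟨m, hxm⟩ : ∃ m, x' ∈ (μ m).support := by
    simpa using hx'U
  have hm : N' ≤ m := by
    by_contra hc
    push_neg at hc
    have : x' ∈ T := by
      rw [hT]
      exact Finset.mem_biUnion.mpr ⟨m, Finset.mem_range.mpr hc, hxm⟩
    have := hM0 x' this
    have := lt_of_le_of_lt (le_max_left M0 R) hx'
    linarith
  refine ⟨m, le_trans (le_max_left _ _) hm, ?_, x', hxm, lt_of_le_of_lt (le_max_right _ _) hx'⟩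
  have := hN₁ m (le_trans (le_max_right _ _) hm)
  rwa [Real.dist_eq, sub_zero] at this

/-- The key construction step. -/
lemma jn_key_step [CompletelyRegularSpace X] [T2Space X] (hμ : IsJNSeq μ) (hF : Continuous F)
    (hunb : ∀ M : ℝ, ∃ x ∈ ⋃ n, ((μ n).support : Set X), M < F x)
    (G₀ : X → ℝ) (hG₀ : Continuous G₀) (s₀ : Finset X) (B₀ : ℝ)
    (hB₀ : ∀ y ∈ s₀, F y ≤ B₀) (N₀ : ℕ) :
    ∃ d : JNStage μ F, N₀ < d.n ∧ B₀ + 1 < F d.x ∧ s₀ ⊆ d.s ∧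
      (∀ y, d.G y = G₀ y + d.g y) ∧ ∀ y ∈ s₀, d.g y = 0 := by
  obtain ⟨m, hm, hsmall, x', hx', hFx'⟩ :=
    jn_exists_index hμ hunb G₀ hG₀ (N₀ + 1) (B₀ + 1)
  have hμx' : μ m x' ≠ 0 := Finsupp.mem_support_iff.mp hx'
  obtain ⟨u, huc, hux, hu0⟩ := jn_sep x' (s₀ ∪ (μ m).support)
  set φ : ℝ → ℝ := fun r => max 0 (1 - 2 * |r - F x'|) with hφ
  have hφc : Continuous φ :=
    continuous_const.max (continuous_const.sub (continuous_const.mul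
      ((continuous_id.sub continuous_const).abs)))
  set g' : X → ℝ := fun y => (μ m x')⁻¹ * (u y * φ (F y)) with hg'
  have hg'c : Continuous g' :=
    continuous_const.mul (huc.mul (hφc.comp hF))
  have hg'x' : g' x' = (μ m x')⁻¹ := by
    simp [hg', hφ, hux]
  have hg'zero : ∀ y, y ≠ x' → y ∈ s₀ ∪ (μ m).support → g' y = 0 := by
    intro y hne hy
    have : u y = 0 := hu0 y (Finset.mem_erase.mpr ⟨hne, hy⟩)
    simp [hg', this]
  have hx'notin : ∀ y ∈ s₀, y ≠ x' := by
    intro y hy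
    have := hB₀ y hy
    intro h; rw [h] at this; linarith
  obtain ⟨B₁, hB₁⟩ : ∃ B₁, ∀ y ∈ (μ m).support, F y ≤ B₁ := by
    obtain ⟨B₁, hB₁⟩ := ((μ m).support.finite_toSet.image F).bddAbove
    exact ⟨B₁, fun y hy => hB₁ ⟨y, by simpa using hy, rfl⟩⟩
  have hsum : ∑ y ∈ (μ m).support, μ m y * g' y = 1 := by
    rw [Finset.sum_eq_single x']
    · rw [hg'x', mul_inv_cancel₀ hμx']
    · intro y hy hne
      rw [hg'zero y hne (Finset.mem_union_right _ hy), mul_zero]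
    · intro h; exact absurd hx' h
  refine ⟨⟨m, x', g', fun y => G₀ y + g' y, s₀ ∪ (μ m).support, max B₀ B₁,
      hx', hg'c, hG₀.add hg'c, ?_, ?_, Finset.subset_union_right, ?_⟩,
      lt_of_lt_of_le (Nat.lt_succ_self _) hm, hFx', Finset.subset_union_left,
      fun y => rfl, ?_⟩
  · -- hslab
    intro y hy
    have hφne : φ (F y) ≠ 0 := by
      intro h; apply hy; simp [hg', h]
    have : 0 < 1 - 2 * |F y - F x'| := by
      rcases lt_or_ge 0 (1 - 2 * |F y - F x'|) with h | h
      · exact h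
      · exact absurd (max_eq_left h) hφne
    linarith
  · -- hB
    intro y hy
    rcases Finset.mem_union.mp hy with h | h
    · exact le_trans (hB₀ y h) (le_max_left _ _)
    · exact le_trans (hB₁ y h) (le_max_right _ _)
  · -- hbig
    have : ∑ y ∈ (μ m).support, μ m y * (G₀ y + g' y)
        = (∑ y ∈ (μ m).support, μ m y * G₀ y) + ∑ y ∈ (μ m).support, μ m y * g' y := by
      rw [← Finset.sum_add_distrib]
      exact Finset.sum_congr rfl fun y _ => mul_add _ _ _
    rw [this, hsum]
    rw [abs_lt] at hsmall
    rw [le_abs]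
    left; linarith
  · -- g' vanishes on s₀
    intro y hy
    exact hg'zero y (hx'notin y hy) (Finset.mem_union_left _ hy)

end Aux

/-- The union of the supports of a JN-sequence on a Tychonoff space `X` is a bounded
subset of `X`: every continuous real-valued function on `X` is bounded on it. -/
theorem stmt16 (X : Type*) [TopologicalSpace X] [CompletelyRegularSpace X] [T2Space X]
    (μ : ℕ → (X →₀ ℝ)) (hμ : IsJNSeq μ) :
    ∀ f : X → ℝ, Continuous f →
      ∃ M : ℝ, ∀ x ∈ ⋃ n, ((μ n).support : Set X), |f x| ≤ M := by
  intro f hf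
  by_contra hcon
  push_neg at hcon
  set F : X → ℝ := fun x => |f x| with hFdef
  have hF : Continuous F := hf.abs
  have hunb : ∀ M : ℝ, ∃ x ∈ ⋃ n, ((μ n).support : Set X), M < F x := hcon
  -- the recursive construction
  have hstep : ∀ p : JNStage μ F, ∃ d : JNStage μ F, p.n < d.n ∧ p.B + 1 < F d.x ∧
      p.s ⊆ d.s ∧ (∀ y, d.G y = p.G y + d.g y) ∧ ∀ y ∈ p.s, d.g y = 0 :=
    fun p => jn_key_step hμ hF hunb p.G p.hGc p.s p.B p.hB p.n
  choose stepFn hstepFn using hstep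
  obtain ⟨d₀, -, -, -, hG₀, -⟩ :=
    jn_key_step hμ hF hunb (fun _ => (0:ℝ)) continuous_const ∅ 0 (by simp) 0
  set seq : ℕ → JNStage μ F := fun k => stepFn^[k] d₀ with hseqdef
  have hseqsucc : ∀ k, seq (k+1) = stepFn (seq k) := fun k =>
    Function.iterate_succ_apply' stepFn k d₀
  have hnext : ∀ k, (seq k).n < (seq (k+1)).n ∧ (seq k).B + 1 < F (seq (k+1)).x ∧
      (seq k).s ⊆ (seq (k+1)).s ∧ (∀ y, (seq (k+1)).G y = (seq k).G y + (seq (k+1)).g y) ∧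
      ∀ y ∈ (seq k).s, (seq (k+1)).g y = 0 := fun k => by
    rw [hseqsucc]; exact hstepFn (seq k)
  -- the x-values grow
  have hxB : ∀ k, F (seq k).x ≤ (seq k).B := fun k =>
    (seq k).hB _ ((seq k).hsupp (seq k).hx)
  have hgap : ∀ k, F (seq k).x + 1 ≤ F (seq (k+1)).x := fun k =>
    le_of_lt (lt_of_le_of_lt (by linarith [hxB k]) (hnext k).2.1)
  have hgrow : ∀ k : ℕ, F (seq 0).x + (k : ℝ) ≤ F (seq k).x := by
    intro k
    induction k with
    | zero => simp
    | succ k ih =>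
      push_cast
      linarith [hgap k]
  -- support sets grow
  have hsmono : ∀ j k, j ≤ k → (seq j).s ⊆ (seq k).s := by
    intro j k hjk
    induction k with
    | zero => rw [Nat.le_zero.mp hjk]
    | succ k ih =>
      rcases Nat.lt_or_ge j (k+1) with h | h
      · exact (ih (Nat.lt_succ_iff.mp h)).trans (hnext k).2.2.1
      · rw [Nat.le_antisymm hjk h]
  -- indices grow
  have hnge : ∀ k, k ≤ (seq k).n := by
    intro k
    induction k with
    | zero => exact Nat.zero_le _
    | succ k ih => exact Nat.succ_le_of_lt (lt_of_le_of_lt ih (hnext k).1)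
  -- the global function
  set g : X → ℝ := fun y => ∑ᶠ j, (seq j).g y with hgdef
  have hlf : LocallyFinite fun j => Function.support fun y => (seq j).g y := by
    intro y
    refine ⟨F ⁻¹' Set.Ioo (F y - 1) (F y + 1),
      (isOpen_Ioo.preimage hF).mem_nhds
        (by simp only [Set.mem_preimage, Set.mem_Ioo]; constructor <;> linarith), ?_⟩
    have hsub : {j | ((Function.support fun z => (seq j).g z) ∩
        F ⁻¹' Set.Ioo (F y - 1) (F y + 1)).Nonempty} ⊆
        Set.Iic (Nat.floor (max (F y + 3/2 - F (seq 0).x) 0)) := by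
      intro j hj
      obtain ⟨z, hz1, hz2⟩ := hj
      have h1 : |F z - F (seq j).x| < 1/2 := (seq j).hslab z hz1
      obtain ⟨hz3, hz4⟩ := hz2
      have h2 : F (seq 0).x + (j : ℝ) ≤ F (seq j).x := hgrow j
      have h3 : (j : ℝ) ≤ F y + 3/2 - F (seq 0).x := by
        rw [abs_lt] at h1
        linarith
      exact Nat.le_floor (le_max_iff.mpr (Or.inl h3))
    exact Set.Finite.subset (Set.finite_Iic _) hsub
  have hgc : Continuous g := continuous_finsum (fun j => (seq j).hgc) hlf
  -- partial sums
  have hGsum : ∀ k y, (seq k).G y = ∑ j ∈ Finset.range (k+1), (seq j).g y := by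
    intro k
    induction k with
    | zero =>
      intro y
      have h0 : (seq 0 : JNStage μ F) = d₀ := rfl
      simp [Finset.sum_range_one, h0, hG₀ y]
    | succ k ih =>
      intro y
      rw [(hnext k).2.2.2.1 y, ih y]
      exact (Finset.sum_range_succ (fun j => (seq j).g y) (k+1)).symm
  -- evaluation of g on the support of μ (seq k).n
  have heval : ∀ k, ∀ y ∈ (μ (seq k).n).support, g y = (seq k).G y := by
    intro k y hy
    rw [hGsum k y, hgdef]
    apply finsum_eq_sum_of_support_subset
    intro j hj
    simp only [Finset.coe_range, Set.mem_Iio]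
    by_contra hjk
    push_neg at hjk
    -- j ≥ k+1, so (seq j).g vanishes on (seq (j-1)).s ⊇ (seq k).s ∋ y
    obtain ⟨i, rfl⟩ : ∃ i, j = i + 1 := ⟨j - 1, by omega⟩
    have hki : k ≤ i := by omega
    have hy' : y ∈ (seq i).s := hsmono k i hki ((seq k).hsupp hy)
    exact hj ((hnext i).2.2.2.2 y hy')
  -- contradiction with the JN property
  have htend := hμ.2 g hgc
  rw [Metric.tendsto_atTop] at htend
  obtain ⟨N, hN⟩ := htend (1/2) (by norm_num)
  have h1 := hN (seq N).n (hnge N)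
  rw [Real.dist_eq, sub_zero] at h1
  have h2 : ∑ y ∈ (μ (seq N).n).support, μ (seq N).n y * g y
      = ∑ y ∈ (μ (seq N).n).support, μ (seq N).n y * (seq N).G y :=
    Finset.sum_congr rfl fun y hy => by rw [heval N y hy]
  rw [h2] at h1
  linarith [(seq N).hbig]
end

section
/- Let E and F be nonempty finite subsets of a set X and let μ : X × X → ℝ be a function (a signed measure on E × F). Then there exist disjoint sets G ⊆ E and H ⊆ F such that ∑_{(x,y) ∈ G × H} |μ(x,y)| ≥ (1/6) · ∑_{(x,y) ∈ E × F, x ≠ y} |μ(x,y)|. -/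
open Finset

lemma count_xy {X : Type*} [DecidableEq X] (T : Finset X) (x y : X)
    (hx : x ∈ T) (hy : y ∈ T) (hxy : x ≠ y) :
    (T.powerset.filter (fun S => x ∈ S ∧ y ∉ S)).card = 2 ^ (T.card - 2) := by
  have h : (T.powerset.filter (fun S => x ∈ S ∧ y ∉ S)).card
      = ((T.erase x).erase y).powerset.card := by
    refine Finset.card_bij' (fun S _ => S.erase x) (fun A _ => insert x A) ?_ ?_ ?_ ?_
    · intro S hS
      simp only [mem_filter, mem_powerset] at hS
      obtain ⟨hST, hxS, hyS⟩ := hS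
      simp only [mem_powerset]
      intro z hz
      simp only [mem_erase] at hz ⊢
      exact ⟨fun h => hyS (h ▸ hz.2), hz.1, hST hz.2⟩
    · intro A hA
      simp only [mem_powerset] at hA
      simp only [mem_filter, mem_powerset]
      have hAx : x ∉ A := fun h => by
        have := hA h; simp at this
      have hAy : y ∉ A := fun h => by
        have := hA h; simp [hxy.symm] at this
      refine ⟨?_, mem_insert_self _ _, ?_⟩
      · intro z hz
        rcases mem_insert.mp hz with rfl | hz
        · exact hx
        · have := hA hz; simp only [mem_erase] at this; exact this.2.2
      · simp [hAy, hxy.symm]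
    · intro S hS
      simp only [mem_filter, mem_powerset] at hS
      exact Finset.insert_erase hS.2.1
    · intro A hA
      simp only [mem_powerset] at hA
      have hAx : x ∉ A := fun h => by
        have := hA h; simp at this
      exact Finset.erase_insert hAx
  rw [h, card_powerset, card_erase_of_mem, card_erase_of_mem hx]
  · congr 1
  · exact mem_erase.mpr ⟨hxy.symm, hy⟩

/-- Given nonempty finite sets `E, F ⊆ X` and a signed measure `μ` on `E × F` (identified
with a real-valued function on `X × X`), there are disjoint `G ⊆ E` and `H ⊆ F` with
`|μ|(G × H) ≥ |μ|((E × F) \ Δ_X) / 6`. -/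
theorem stmt17 {X : Type*} [DecidableEq X] (E F : Finset X)
    (hE : E.Nonempty) (hF : F.Nonempty) (μ : X × X → ℝ) :
    ∃ G H : Finset X, G ⊆ E ∧ H ⊆ F ∧ Disjoint G H ∧
      (1 / 6 : ℝ) * ∑ p ∈ (E ×ˢ F).filter (fun p => p.1 ≠ p.2), |μ p| ≤
        ∑ p ∈ G ×ˢ H, |μ p| := by
  classical
  set total := ∑ p ∈ (E ×ˢ F).filter (fun p => p.1 ≠ p.2), |μ p| with htotal
  by_cases h0 : total ≤ 0
  · refine ⟨∅, ∅, by simp, by simp, by simp, ?_⟩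
    simp only [Finset.empty_product, Finset.sum_empty]
    nlinarith
  push_neg at h0
  set T := E ∪ F with hT
  set n := T.card with hn
  -- total > 0 gives an off-diagonal pair, hence n ≥ 2
  have hfne : ((E ×ˢ F).filter (fun p => p.1 ≠ p.2)).Nonempty := by
    by_contra h
    rw [Finset.not_nonempty_iff_eq_empty] at h
    rw [htotal, h, Finset.sum_empty] at h0
    exact lt_irrefl 0 h0
  obtain ⟨p, hp⟩ := hfne
  simp only [mem_filter, mem_product] at hp
  have hn2 : 2 ≤ n := by
    have hsub : ({p.1, p.2} : Finset X) ⊆ T := by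
      intro z hz
      rcases mem_insert.mp hz with rfl | hz
      · exact mem_union_left _ hp.1.1
      · simp only [mem_singleton] at hz
        subst hz
        exact mem_union_right _ hp.1.2
    calc 2 = ({p.1, p.2} : Finset X).card := by rw [card_insert_of_notMem (by simp [hp.2]), card_singleton]
    _ ≤ n := card_le_card hsub
  -- key identity
  have key : ∑ S ∈ T.powerset, ∑ q ∈ (E ∩ S) ×ˢ (F \ S), |μ q|
      = (2 : ℝ) ^ (n - 2) * total := by
    have step1 : ∀ S : Finset X, (E ∩ S) ×ˢ (F \ S)
        = (E ×ˢ F).filter (fun q => q.1 ∈ S ∧ q.2 ∉ S) := by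
      intro S
      ext q
      simp only [mem_product, mem_inter, mem_sdiff, mem_filter]
      tauto
    calc ∑ S ∈ T.powerset, ∑ q ∈ (E ∩ S) ×ˢ (F \ S), |μ q|
        = ∑ S ∈ T.powerset, ∑ q ∈ E ×ˢ F, if q.1 ∈ S ∧ q.2 ∉ S then |μ q| else 0 := by
          refine Finset.sum_congr rfl fun S _ => ?_
          rw [step1 S, Finset.sum_filter]
      _ = ∑ q ∈ E ×ˢ F, ∑ S ∈ T.powerset, if q.1 ∈ S ∧ q.2 ∉ S then |μ q| else 0 :=
          Finset.sum_comm
      _ = ∑ q ∈ E ×ˢ F, ((T.powerset.filter (fun S => q.1 ∈ S ∧ q.2 ∉ S)).card : ℝ) * |μ q| := by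
          refine Finset.sum_congr rfl fun q _ => ?_
          rw [← Finset.sum_filter, Finset.sum_const, nsmul_eq_mul]
      _ = ∑ q ∈ (E ×ˢ F).filter (fun q => q.1 ≠ q.2),
            ((T.powerset.filter (fun S => q.1 ∈ S ∧ q.2 ∉ S)).card : ℝ) * |μ q| := by
          rw [← Finset.sum_filter_add_sum_filter_not (E ×ˢ F) (fun q => q.1 ≠ q.2)]
          have : ∑ q ∈ (E ×ˢ F).filter (fun q => ¬q.1 ≠ q.2),
              ((T.powerset.filter (fun S => q.1 ∈ S ∧ q.2 ∉ S)).card : ℝ) * |μ q| = 0 := by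
            refine Finset.sum_eq_zero fun q hq => ?_
            simp only [mem_filter, not_not] at hq
            have : T.powerset.filter (fun S => q.1 ∈ S ∧ q.2 ∉ S) = ∅ := by
              rw [Finset.filter_eq_empty_iff]
              intro S _
              rw [hq.2]
              tauto
            simp [this]
          rw [this, add_zero]
      _ = (2 : ℝ) ^ (n - 2) * total := by
          rw [htotal, Finset.mul_sum]
          refine Finset.sum_congr rfl fun q hq => ?_
          simp only [mem_filter, mem_product] at hq
          rw [count_xy T q.1 q.2 (mem_union_left _ hq.1.1) (mem_union_right _ hq.1.2) hq.2]
          push_cast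
          try ring
  -- averaging
  have hcard : (T.powerset.card : ℝ) = 2 ^ n := by rw [card_powerset]; push_cast; ring
  have havg : ∃ S ∈ T.powerset, (2 : ℝ) ^ (n - 2) * total / 2 ^ n
      ≤ ∑ q ∈ (E ∩ S) ×ˢ (F \ S), |μ q| := by
    by_contra h
    push_neg at h
    have : ∑ S ∈ T.powerset, ∑ q ∈ (E ∩ S) ×ˢ (F \ S), |μ q|
        < ∑ S ∈ T.powerset, (2 : ℝ) ^ (n - 2) * total / 2 ^ n := by
      apply Finset.sum_lt_sum_of_nonempty ⟨∅, by simp⟩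
      intro S hS
      exact h S hS
    rw [key, Finset.sum_const, nsmul_eq_mul, hcard] at this
    have h2n : (2 : ℝ) ^ n ≠ 0 := by positivity
    field_simp at this
    try linarith
  obtain ⟨S, hS, hle⟩ := havg
  refine ⟨E ∩ S, F \ S, inter_subset_left, sdiff_subset, ?_, ?_⟩
  · rw [Finset.disjoint_left]
    intro a ha hb
    exact (mem_sdiff.mp hb).2 (mem_inter.mp ha).2
  · refine le_trans ?_ hle
    have hp2 : (0:ℝ) < 2 ^ (n - 2) := by positivity
    have hpow : (2:ℝ) ^ n = 2 ^ (n - 2) * 4 := by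
      calc (2:ℝ)^n = 2^(n-2+2) := by rw [Nat.sub_add_cancel hn2]
      _ = 2^(n-2)*4 := by rw [pow_add]; norm_num
    have heq : (2:ℝ) ^ (n - 2) * total / 2 ^ n = total / 4 := by
      rw [hpow]; field_simp
    rw [heq]
    linarith
end
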